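/- For every μ > 0 and every r ∈ ℤ with r + ⌊μ⌋ ≥ 0, there exists a function h : ℤ → [0,∞) with Σ_{l ∈ ℤ} h(l) ≤ 3 such that for all l ∈ ℤ, |(l − ⟨μ⟩)·(ĝ_{μ,r}(l+1) − ĝ_{μ,r}(l))| ≤ h(l+1) + h(l) + 1/μ. -/

import Mathlib

noncomputable section

/-- The Stein–Chen solution `g_{μ,s}` for the one-point set `{s}`: the unique
function with `g 0 = 0` and `μ·g(j+1) − j·g(j) = 1[j=s] − e^{−μ} μ^s / s!`. -/
def steinChen (μ : ℝ) (s : ℕ) : ℕ → ℝ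
  | 0 => 0
  | j + 1 => ((j : ℝ) * steinChen μ s j + (if j = s then 1 else 0)
      - Real.exp (-μ) * μ ^ s / (Nat.factorial s : ℝ)) / μ

/-- The translated Stein–Chen solution `ĝ_{μ,r}`. -/
def ghat (μ : ℝ) (r : ℤ) (l : ℤ) : ℝ :=
  if l < -⌊μ⌋ then 0 else steinChen μ (r + ⌊μ⌋).toNat (l + ⌊μ⌋).toNat


noncomputable section
namespace SteinAux
open Finset

def pois (μ : ℝ) (k : ℕ) : ℝ := Real.exp (-μ) * μ ^ k / (Nat.factorial k : ℝ)

def G (μ : ℝ) (j : ℕ) : ℝ := ∑ k ∈ Finset.range (j+1), pois μ k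

def T (μ : ℝ) (j : ℕ) : ℝ := ∑' k : ℕ, pois μ (k + (j+1))

variable {μ : ℝ} {s : ℕ}

lemma pois_pos (hμ : 0 < μ) (k : ℕ) : 0 < pois μ k :=
  div_pos (mul_pos (Real.exp_pos _) (pow_pos hμ _))
    (Nat.cast_pos.mpr (Nat.factorial_pos _))

lemma pois_rec (k : ℕ) : ((k:ℝ)+1) * pois μ (k+1) = μ * pois μ k := by
  unfold pois
  rw [Nat.factorial_succ]
  push_cast
  have h1 : (Nat.factorial k : ℝ) ≠ 0 := Nat.cast_ne_zero.mpr (Nat.factorial_ne_zero k)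
  field_simp
  ring

lemma factorial_ineq (a b c : ℕ) :
    (a+b).factorial * (a+c).factorial ≤ a.factorial * (a+b+c).factorial := by
  have h1 := Nat.add_choose_mul_factorial_mul_factorial a c
  have h2 := Nat.add_choose_mul_factorial_mul_factorial (a+b) c
  have h3 : (a+c).choose c ≤ (a+b+c).choose c := Nat.choose_le_choose c (by omega)
  calc (a+b).factorial * (a+c).factorial
      = (a+b).factorial * ((a+c).choose c * a.factorial * c.factorial) := by rw [h1]
    _ ≤ (a+b).factorial * ((a+b+c).choose c * a.factorial * c.factorial) := by
        apply Nat.mul_le_mul_left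
        exact Nat.mul_le_mul_right _ (Nat.mul_le_mul_right _ h3)
    _ = a.factorial * ((a+b+c).choose c * (a+b).factorial * c.factorial) := by ring
    _ = a.factorial * (a+b+c).factorial := by rw [h2]

lemma pois_lc (hμ : 0 < μ) (a b c : ℕ) :
    pois μ (a+b+c) * pois μ a ≤ pois μ (a+b) * pois μ (a+c) := by
  unfold pois
  rw [div_mul_div_comm, div_mul_div_comm]
  have hnum : Real.exp (-μ) * μ ^ (a+b+c) * (Real.exp (-μ) * μ ^ a)
      = Real.exp (-μ) * μ ^ (a+b) * (Real.exp (-μ) * μ ^ (a+c)) := by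
    have : μ ^ (a+b+c) * μ ^ a = μ ^ (a+b) * μ ^ (a+c) := by
      rw [← pow_add, ← pow_add]; congr 1; omega
    calc Real.exp (-μ) * μ ^ (a+b+c) * (Real.exp (-μ) * μ ^ a)
        = Real.exp (-μ) * Real.exp (-μ) * (μ ^ (a+b+c) * μ ^ a) := by ring
      _ = Real.exp (-μ) * Real.exp (-μ) * (μ ^ (a+b) * μ ^ (a+c)) := by rw [this]
      _ = Real.exp (-μ) * μ ^ (a+b) * (Real.exp (-μ) * μ ^ (a+c)) := by ring
  rw [hnum]
  apply div_le_div_of_nonneg_left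
  · positivity
  · positivity
  · have := factorial_ineq a b c
    calc ((a+b).factorial : ℝ) * ((a+c).factorial : ℝ)
        ≤ ((a.factorial : ℝ) * ((a+b+c).factorial : ℝ)) := by exact_mod_cast this
      _ = ((a+b+c).factorial : ℝ) * (a.factorial : ℝ) := by ring

lemma summable_pois : Summable (pois μ) := by
  have h := (Real.summable_pow_div_factorial μ).mul_left (Real.exp (-μ))
  have he : (fun i => Real.exp (-μ) * (μ ^ i / (Nat.factorial i : ℝ))) = pois μ := by
    funext i; rw [pois, mul_div_assoc]
  rwa [he] at h

lemma summable_pois_shift (n : ℕ) : Summable (fun k => pois μ (k + n)) :=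
  (summable_nat_add_iff n).mpr summable_pois

lemma tsum_pois : ∑' k, pois μ k = 1 := by
  have h : ∑' k : ℕ, μ ^ k / (Nat.factorial k : ℝ) = Real.exp μ := by
    rw [Real.exp_eq_exp_ℝ, NormedSpace.exp_eq_tsum_div]
  calc ∑' k, pois μ k = ∑' k, Real.exp (-μ) * (μ ^ k / (Nat.factorial k : ℝ)) := by
        apply tsum_congr; intro k; rw [pois, mul_div_assoc]
    _ = Real.exp (-μ) * ∑' k, μ ^ k / (Nat.factorial k : ℝ) := tsum_mul_left
    _ = Real.exp (-μ) * Real.exp μ := by rw [h]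
    _ = 1 := by rw [← Real.exp_add]; simp

lemma G_add_T (j : ℕ) : G μ j + T μ j = 1 := by
  have h := Summable.sum_add_tsum_nat_add (f := pois μ) (j+1) summable_pois
  rw [tsum_pois] at h
  exact h

lemma T_nonneg (hμ : 0 < μ) (j : ℕ) : 0 ≤ T μ j :=
  tsum_nonneg fun k => (pois_pos hμ _).le

lemma G_nonneg (hμ : 0 < μ) (j : ℕ) : 0 ≤ G μ j :=
  Finset.sum_nonneg fun k _ => (pois_pos hμ _).le

lemma G_le_one (hμ : 0 < μ) (j : ℕ) : G μ j ≤ 1 := by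
  have := G_add_T (μ := μ) j; have := T_nonneg hμ j; linarith

lemma T_le_one (hμ : 0 < μ) (j : ℕ) : T μ j ≤ 1 := by
  have := G_add_T (μ := μ) j; have := G_nonneg hμ j; linarith


-- key1a : π_s G j ≤ π_j G s for j ≤ s
lemma key1a (hμ : 0 < μ) {j : ℕ} (hj : j ≤ s) :
    pois μ s * G μ j ≤ pois μ j * G μ s := by
  have termwise : ∀ k ∈ range (j+1),
      pois μ s * pois μ k ≤ pois μ j * pois μ (k + (s - j)) := by
    intro k hk
    rw [Finset.mem_range] at hk
    have h := pois_lc hμ k (j - k) (s - j)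
    rw [show k + (j-k) + (s-j) = s by omega, show k + (j-k) = j by omega] at h
    exact h
  calc pois μ s * G μ j = ∑ k ∈ range (j+1), pois μ s * pois μ k := by
        rw [G, mul_sum]
    _ ≤ ∑ k ∈ range (j+1), pois μ j * pois μ (k + (s-j)) := sum_le_sum termwise
    _ = pois μ j * ∑ k ∈ range (j+1), pois μ (k + (s-j)) := by rw [mul_sum]
    _ ≤ pois μ j * G μ s := by
        apply mul_le_mul_of_nonneg_left _ (pois_pos hμ j).le
        have himg : ∑ k ∈ range (j+1), pois μ (k + (s-j))
            = ∑ t ∈ (range (j+1)).image (· + (s-j)), pois μ t := by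
          rw [Finset.sum_image]
          intro a _ b _ hab; simp only at hab; omega
        rw [himg, G]
        apply Finset.sum_le_sum_of_subset_of_nonneg
        · intro t ht
          simp only [Finset.mem_image, Finset.mem_range] at ht ⊢
          omega
        · intro t _ _; exact (pois_pos hμ t).le

lemma key1 (hμ : 0 < μ) {j : ℕ} (hj : j ≤ s) : pois μ s * G μ j ≤ pois μ j := by
  calc pois μ s * G μ j ≤ pois μ j * G μ s := key1a hμ hj
    _ ≤ pois μ j * 1 := mul_le_mul_of_nonneg_left (G_le_one hμ s) (pois_pos hμ j).le
    _ = pois μ j := mul_one _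

lemma key2 (hμ : 0 < μ) {j : ℕ} (hj : s ≤ j) : pois μ s * T μ j ≤ pois μ j := by
  have h1 : pois μ s * T μ j ≤ pois μ j * T μ s := by
    rw [T, T, ← tsum_mul_left, ← tsum_mul_left]
    apply Summable.tsum_le_tsum _ ((summable_pois_shift (j+1)).mul_left _)
      ((summable_pois_shift (s+1)).mul_left _)
    intro k
    have h := pois_lc hμ s (j - s) (k+1)
    rw [show s + (j-s) + (k+1) = k + (j+1) by omega, show s + (j-s) = j by omega,
      show s + (k+1) = k + (s+1) by omega] at h
    nlinarith [pois_pos hμ (k + (j+1)), pois_pos hμ s]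
  calc pois μ s * T μ j ≤ pois μ j * T μ s := h1
    _ ≤ pois μ j * 1 := mul_le_mul_of_nonneg_left (T_le_one hμ s) (pois_pos hμ j).le
    _ = pois μ j := mul_one _

lemma key3 (hμ : 0 < μ) (j : ℕ) : pois μ (j+1) * G μ j ≤ pois μ j * G μ (j+1) := by
  have termwise : ∀ k ∈ range (j+1),
      pois μ (j+1) * pois μ k ≤ pois μ j * pois μ (k+1) := by
    intro k hk
    rw [Finset.mem_range] at hk
    have h := pois_lc hμ k (j - k) 1
    rw [show k + (j-k) + 1 = j+1 by omega, show k + (j-k) = j by omega] at h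
    nlinarith [pois_pos hμ (j+1), pois_pos hμ k]
  calc pois μ (j+1) * G μ j = ∑ k ∈ range (j+1), pois μ (j+1) * pois μ k := by
        rw [G, mul_sum]
    _ ≤ ∑ k ∈ range (j+1), pois μ j * pois μ (k+1) := sum_le_sum termwise
    _ = pois μ j * ∑ k ∈ range (j+1), pois μ (k+1) := by rw [mul_sum]
    _ ≤ pois μ j * G μ (j+1) := by
        apply mul_le_mul_of_nonneg_left _ (pois_pos hμ j).le
        have h := Finset.sum_range_succ' (pois μ) (j+1)
        rw [G]
        have hp0 := pois_pos hμ 0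
        linarith [h]

lemma key4 (hμ : 0 < μ) (j : ℕ) : pois μ j * T μ (j+1) ≤ pois μ (j+1) * T μ j := by
  rw [T, T, ← tsum_mul_left, ← tsum_mul_left]
  apply Summable.tsum_le_tsum _ ((summable_pois_shift (j+2)).mul_left _)
    ((summable_pois_shift (j+1)).mul_left _)
  intro k
  have h := pois_lc hμ j 1 (k+1)
  rw [show j + 1 + (k+1) = k + (j+1+1) by omega, show j + (k+1) = k + (j+1) by omega] at h
  nlinarith [pois_pos hμ (k + (j+1+1)), pois_pos hμ j]


lemma steinChen_zero : steinChen μ s 0 = 0 := rfl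

lemma steinChen_succ (j : ℕ) : steinChen μ s (j+1) =
    ((j : ℝ) * steinChen μ s j + (if j = s then 1 else 0) - pois μ s) / μ := rfl

def A (μ : ℝ) (s : ℕ) (j : ℕ) : ℝ := pois μ s * ((if s ≤ j then 1 else 0) - G μ j)

lemma g_formula (hμ : 0 < μ) (j : ℕ) :
    steinChen μ s (j+1) = A μ s j / (μ * pois μ j) := by
  have hμ' : μ ≠ 0 := hμ.ne'
  induction j with
  | zero =>
    rw [steinChen_succ, steinChen_zero]
    have hG0 : G μ 0 = pois μ 0 := by simp [G]
    have hp0 : pois μ 0 ≠ 0 := (pois_pos hμ 0).ne'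
    by_cases h0 : s = 0
    · subst h0
      rw [A, hG0]
      simp only [if_pos rfl, le_refl, Nat.cast_zero]
      field_simp
      ring
    · rw [A, hG0]
      rw [if_neg (by omega : ¬ (0 = s)), if_neg (by omega : ¬ (s ≤ 0))]
      field_simp
      ring
  | succ j ih =>
    rw [steinChen_succ, ih]
    have hA : A μ s (j+1) = A μ s j + (if j+1 = s then (1:ℝ) else 0) * pois μ (j+1)
        - pois μ s * pois μ (j+1) := by
      rw [A, A, G, G, Finset.sum_range_succ]
      rcases Nat.lt_trichotomy (j+1) s with h | h | h
      · rw [if_neg (by omega : ¬ (j+1 = s)), if_neg (by omega : ¬ (s ≤ j+1)),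
          if_neg (by omega : ¬ (s ≤ j))]
        ring
      · rw [if_pos h, if_pos (by omega : s ≤ j+1), if_neg (by omega : ¬ (s ≤ j)), ← h]
        ring
      · rw [if_neg (by omega : ¬ (j+1 = s)), if_pos (by omega : s ≤ j+1),
          if_pos (by omega : s ≤ j)]
        ring
    have hrec : ((j:ℝ)+1) * pois μ (j+1) = μ * pois μ j := pois_rec j
    have hpj : pois μ j ≠ 0 := (pois_pos hμ j).ne'
    have hpj1 : pois μ (j+1) ≠ 0 := (pois_pos hμ (j+1)).ne'
    rw [hA]
    push_cast
    by_cases hc : j + 1 = s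
    · rw [if_pos hc]
      field_simp
      linear_combination (A μ s j) * hrec
    · rw [if_neg hc]
      field_simp
      linear_combination (A μ s j) * hrec

lemma A_nonpos (hμ : 0 < μ) {j : ℕ} (h : j < s) : A μ s j ≤ 0 := by
  rw [A, if_neg (by omega : ¬ (s ≤ j))]
  have := G_nonneg hμ j
  have := (pois_pos hμ s).le
  nlinarith

lemma A_eq_T (hμ : 0 < μ) {j : ℕ} (h : s ≤ j) : A μ s j = pois μ s * T μ j := by
  rw [A, if_pos h]
  have := G_add_T (μ := μ) j
  have : (1 : ℝ) - G μ j = T μ j := by linarith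
  rw [this]

lemma A_abs (hμ : 0 < μ) (j : ℕ) : |A μ s j| ≤ pois μ j := by
  rcases le_or_gt s j with h | h
  · rw [A_eq_T hμ h, abs_of_nonneg (mul_nonneg (pois_pos hμ s).le (T_nonneg hμ j))]
    exact key2 hμ h
  · rw [abs_of_nonpos (A_nonpos hμ h), A, if_neg (by omega : ¬ (s ≤ j))]
    have h2 : pois μ s * (0 - G μ j) = -(pois μ s * G μ j) := by ring
    rw [h2, neg_neg]
    exact key1 hμ h.le

lemma g_abs (hμ : 0 < μ) (j : ℕ) : |steinChen μ s (j+1)| ≤ 1/μ := by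
  rw [g_formula hμ, abs_div, abs_of_pos (mul_pos hμ (pois_pos hμ j))]
  rw [div_le_div_iff₀ (mul_pos hμ (pois_pos hμ j)) hμ]
  calc |A μ s j| * μ ≤ pois μ j * μ :=
        mul_le_mul_of_nonneg_right (A_abs hμ j) hμ.le
    _ = 1 * (μ * pois μ j) := by ring

lemma g_nonneg (hμ : 0 < μ) {j : ℕ} (h : s ≤ j) : 0 ≤ steinChen μ s (j+1) := by
  rw [g_formula hμ, A_eq_T hμ h]
  exact div_nonneg (mul_nonneg (pois_pos hμ s).le (T_nonneg hμ j))
    (mul_pos hμ (pois_pos hμ j)).le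

lemma g_nonpos (hμ : 0 < μ) {j : ℕ} (h : j ≤ s) : steinChen μ s j ≤ 0 := by
  match j, h with
  | 0, _ => rw [steinChen_zero]
  | (i+1), h =>
    rw [g_formula hμ]
    apply div_nonpos_of_nonpos_of_nonneg (A_nonpos hμ (by omega))
      (mul_pos hμ (pois_pos hμ i)).le

def D (μ : ℝ) (s : ℕ) (j : ℕ) : ℝ := steinChen μ s (j+1) - steinChen μ s j

lemma D_nonpos (hμ : 0 < μ) {j : ℕ} (h : j ≠ s) : D μ s j ≤ 0 := by
  match j with
  | 0 =>
    rw [D, steinChen_zero, sub_zero]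
    exact g_nonpos hμ (by omega)
  | (i+1) =>
    rw [D, g_formula hμ, g_formula hμ]
    rw [sub_nonpos, div_le_div_iff₀ (mul_pos hμ (pois_pos hμ (i+1))) (mul_pos hμ (pois_pos hμ i))]
    have hkey : A μ s (i+1) * pois μ i ≤ A μ s i * pois μ (i+1) := by
      rcases Nat.lt_or_ge (i+1) s with hc | hc
      · rw [A, A, if_neg (by omega : ¬ (s ≤ i+1)), if_neg (by omega : ¬ (s ≤ i))]
        have h3 := key3 hμ i
        have hps := (pois_pos hμ s).le
        nlinarith
      · have hc' : s ≤ i := by omega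
        rw [A_eq_T hμ hc, A_eq_T hμ hc']
        have h4 := key4 hμ i
        have hps := (pois_pos hμ s).le
        nlinarith
    nlinarith [hμ, hkey]

lemma D_s_nonneg (hμ : 0 < μ) : 0 ≤ D μ s s := by
  rw [D, sub_nonneg]
  exact le_trans (g_nonpos hμ le_rfl) (g_nonneg hμ le_rfl)

lemma D_s_le (hμ : 0 < μ) : D μ s s ≤ 1/μ := by
  match s with
  | 0 =>
    rw [D, steinChen_zero, sub_zero]
    exact (le_abs_self _).trans (g_abs hμ 0)
  | (t+1) =>
    have hts : t ≤ t+1 := by omega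
    have hps := pois_pos hμ (t+1)
    have hpt := pois_pos hμ t
    have hkey := key1a (s := t+1) hμ hts
    have hGT := G_add_T (μ := μ) (t+1)
    have hGT' : pois μ (t+1) * pois μ t * G μ (t+1) + pois μ (t+1) * pois μ t * T μ (t+1)
        = pois μ (t+1) * pois μ t := by
      calc pois μ (t+1) * pois μ t * G μ (t+1) + pois μ (t+1) * pois μ t * T μ (t+1)
          = pois μ (t+1) * pois μ t * (G μ (t+1) + T μ (t+1)) := by ring
        _ = pois μ (t+1) * pois μ t := by rw [hGT]; ring
    have hmain : pois μ (t+1) * T μ (t+1) * pois μ t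
        + pois μ (t+1) * (pois μ (t+1) * G μ t) ≤ pois μ (t+1) * pois μ t := by
      have h7 := mul_le_mul_of_nonneg_left hkey hps.le
      nlinarith [T_nonneg hμ (t+1)]
    rw [D, g_formula hμ, g_formula hμ, A_eq_T hμ le_rfl, A,
      if_neg (by omega : ¬ (t+1 ≤ t))]
    rw [div_sub_div _ _ (mul_pos hμ hps).ne' (mul_pos hμ hpt).ne',
      div_le_div_iff₀ (mul_pos (mul_pos hμ hps) (mul_pos hμ hpt)) hμ]
    nlinarith [mul_le_mul_of_nonneg_left hmain (mul_pos hμ hμ).le]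

lemma sum_D (hμ : 0 < μ) (N : ℕ) : ∑ j ∈ range N, D μ s j = steinChen μ s N := by
  have h := Finset.sum_range_sub (f := steinChen μ s) N
  rw [steinChen_zero, sub_zero] at h
  exact h

lemma sum_absD (hμ : 0 < μ) (N : ℕ) : ∑ j ∈ range N, |D μ s j| ≤ 2/μ := by
  set M := max N (s+1) with hM
  have hNM : range N ⊆ range M := Finset.range_subset_range.mpr (le_max_left _ _)
  have step1 : ∑ j ∈ range N, |D μ s j| ≤ ∑ j ∈ range M, |D μ s j| :=
    Finset.sum_le_sum_of_subset_of_nonneg hNM (fun i _ _ => abs_nonneg _)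
  have split : ∀ j : ℕ, |D μ s j| = -D μ s j + (if j = s then 2 * D μ s s else 0) := by
    intro j
    by_cases h : j = s
    · subst h
      rw [if_pos rfl, abs_of_nonneg (D_s_nonneg hμ)]; ring
    · rw [if_neg h, abs_of_nonpos (D_nonpos hμ h)]; ring
  have step2 : ∑ j ∈ range M, |D μ s j| = -steinChen μ s M + 2 * D μ s s := by
    calc ∑ j ∈ range M, |D μ s j|
        = ∑ j ∈ range M, (-D μ s j + (if j = s then 2 * D μ s s else 0)) := by
          apply Finset.sum_congr rfl; intro j _; exact split j
      _ = -∑ j ∈ range M, D μ s j + ∑ j ∈ range M, (if j = s then 2 * D μ s s else 0) := by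
          rw [Finset.sum_add_distrib, Finset.sum_neg_distrib]
      _ = -steinChen μ s M + 2 * D μ s s := by
          rw [sum_D hμ, Finset.sum_ite_eq' (range M) s (fun _ => 2 * D μ s s),
            if_pos (Finset.mem_range.mpr (by omega : s < M))]
  have hgM : 0 ≤ steinChen μ s M := by
    have hM1 : M = (M - 1) + 1 := by omega
    rw [hM1]
    exact g_nonneg hμ (by omega)
  have hDs := D_s_le (μ := μ) (s := s) hμ
  calc ∑ j ∈ range N, |D μ s j| ≤ ∑ j ∈ range M, |D μ s j| := step1
    _ = -steinChen μ s M + 2 * D μ s s := step2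
    _ ≤ 2 * (1/μ) := by linarith
    _ = 2/μ := by ring

lemma habs4 (x y z w : ℝ) : |x - y - z + w| ≤ |x| + |y| + |z| + |w| := by
  have he : x - y - z + w = x + -y + -z + w := by ring
  rw [he]
  calc |x + -y + -z + w| ≤ |x + -y + -z| + |w| := abs_add_le _ _
    _ ≤ |x + -y| + |(-z)| + |w| := by linarith [abs_add_le (x + -y) (-z)]
    _ ≤ |x| + |(-y)| + |(-z)| + |w| := by linarith [abs_add_le x (-y)]
    _ = |x| + |y| + |z| + |w| := by rw [abs_neg, abs_neg]

lemma main_ineq (hμ : 0 < μ) (j : ℕ) :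
    |((j:ℝ) - μ) * D μ s j| ≤
      (μ * |D μ s (j+1)| + (if j+1 = s then 1 else 0))
      + (μ * |D μ s j| + (if j = s then 1 else 0)) + 1/μ := by
  have hμ' : μ ≠ 0 := hμ.ne'
  have identity : ((j:ℝ) - μ) * D μ s j =
      μ * D μ s (j+1) - μ * D μ s j - steinChen μ s (j+1)
      + ((if j = s then (1:ℝ) else 0) - (if j+1 = s then (1:ℝ) else 0)) := by
    have e1 : steinChen μ s (j+1) =
        ((j : ℝ) * steinChen μ s j + (if j = s then 1 else 0) - pois μ s) / μ :=
      steinChen_succ j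
    have e2 : steinChen μ s (j+1+1) =
        (((j:ℝ)+1) * steinChen μ s (j+1) + (if j+1 = s then 1 else 0) - pois μ s) / μ := by
      rw [steinChen_succ (j+1)]
      norm_cast
    rw [D, D, show j + 1 + 1 = (j+1)+1 from rfl, e2, e1]
    by_cases hc1 : j = s <;> by_cases hc2 : j + 1 = s <;>
      simp only [if_pos, if_neg, hc1, hc2, if_true, if_false] <;>
      · field_simp
        ring
  rw [identity]
  have h1 := habs4 (μ * D μ s (j+1)) (μ * D μ s j) (steinChen μ s (j+1))
    ((if j = s then (1:ℝ) else 0) - (if j+1 = s then (1:ℝ) else 0))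
  have h2 : |μ * D μ s (j+1)| = μ * |D μ s (j+1)| := by
    rw [abs_mul, abs_of_pos hμ]
  have h3 : |μ * D μ s j| = μ * |D μ s j| := by
    rw [abs_mul, abs_of_pos hμ]
  have h4 : |steinChen μ s (j+1)| ≤ 1/μ := g_abs hμ j
  have h5 : |(if j = s then (1:ℝ) else 0)| = (if j = s then (1:ℝ) else 0) := by
    apply abs_of_nonneg; split <;> norm_num
  have h6 : |(if j+1 = s then (1:ℝ) else 0)| = (if j+1 = s then (1:ℝ) else 0) := by
    apply abs_of_nonneg; split <;> norm_num
  have h7 : |(if j = s then (1:ℝ) else 0) - (if j+1 = s then (1:ℝ) else 0)|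
      ≤ |(if j = s then (1:ℝ) else 0)| + |(if j+1 = s then (1:ℝ) else 0)| := by
    rw [sub_eq_add_neg]
    exact (abs_add_le _ _).trans (by rw [abs_neg])
  rw [h5, h6] at h7
  rw [h2, h3] at h1
  linarith

end SteinAux

/-- There is a nonnegative `h` with `Σ_l h(l) ≤ 3` such that
`|(l − ⟨μ⟩)·(ĝ_{μ,r}(l+1) − ĝ_{μ,r}(l))| ≤ h(l+1) + h(l) + 1/μ` for all `l`. -/
theorem ghat_weighted_difference_bound (μ : ℝ) (hμ : 0 < μ) (r : ℤ) (hr : 0 ≤ r + ⌊μ⌋) :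
    ∃ h : ℤ → ℝ, (∀ l : ℤ, 0 ≤ h l) ∧ Summable h ∧ (∑' l : ℤ, h l) ≤ 3 ∧
      ∀ l : ℤ, |((l : ℝ) - (μ - ⌊μ⌋)) * (ghat μ r (l + 1) - ghat μ r l)|
        ≤ h (l + 1) + h l + 1 / μ := by
  classical
  set m : ℤ := ⌊μ⌋ with hm
  set s : ℕ := (r + m).toNat with hsdef
  have hs : (s : ℤ) = r + m := Int.toNat_of_nonneg hr
  have hμ' : μ ≠ 0 := hμ.ne'
  -- basic ghat facts
  have ghat_nat : ∀ j : ℕ, ghat μ r ((j:ℤ) - m) = steinChen μ s j := by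
    intro j
    rw [ghat, if_neg (by omega : ¬ ((j:ℤ) - m < -m))]
    congr 1
    omega
  have ghat_low : ∀ l : ℤ, l < -m → ghat μ r l = 0 := by
    intro l hl
    rw [ghat, if_pos hl]
  have ghat_low' : ∀ l : ℤ, l ≤ -m → ghat μ r l = 0 := by
    intro l hl
    rcases lt_or_eq_of_le hl with h | h
    · exact ghat_low l h
    · rw [ghat, if_neg (by omega : ¬ (l < -m))]
      have h0 : (l + m).toNat = 0 := by omega
      rw [h0]
      rfl
  set h : ℤ → ℝ := fun l =>
    μ * |ghat μ r (l+1) - ghat μ r l| + (if l = r then 1 else 0) with hh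
  have hnonneg : ∀ l : ℤ, 0 ≤ h l := by
    intro l
    apply add_nonneg (mul_nonneg hμ.le (abs_nonneg _))
    split <;> norm_num
  -- values of h
  have hF : ∀ j : ℕ, h ((j:ℤ) - m) = μ * |SteinAux.D μ s j| + (if j = s then 1 else 0) := by
    intro j
    have e1 : ((j:ℤ) - m) + 1 = ((j+1:ℕ):ℤ) - m := by push_cast; ring
    have e2 : ((j:ℤ) - m = r) ↔ (j = s) := by omega
    rw [hh]
    simp only []
    rw [e1, ghat_nat, ghat_nat, SteinAux.D]
    congr 1
    by_cases hc : j = s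
    · rw [if_pos (e2.mpr hc), if_pos hc]
    · rw [if_neg (fun hx => hc (e2.mp hx)), if_neg hc]
  have hvanish : ∀ l : ℤ, l < -m → h l = 0 := by
    intro l hl
    rw [hh]
    simp only []
    rw [ghat_low' l (by omega), ghat_low' (l+1) (by omega),
      if_neg (by omega : ¬ (l = r))]
    simp
  -- summability
  set F : ℕ → ℝ := fun j => μ * |SteinAux.D μ s j| + (if j = s then 1 else 0) with hFdef
  have hFnonneg : ∀ j, 0 ≤ F j := by
    intro j
    apply add_nonneg (mul_nonneg hμ.le (abs_nonneg _))
    split <;> norm_num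
  have hFsum : ∀ n : ℕ, ∑ j ∈ Finset.range n, F j ≤ 3 := by
    intro n
    have h1 : ∑ j ∈ Finset.range n, F j
        = μ * ∑ j ∈ Finset.range n, |SteinAux.D μ s j|
          + ∑ j ∈ Finset.range n, (if j = s then (1:ℝ) else 0) := by
      rw [hFdef, Finset.sum_add_distrib, Finset.mul_sum]
    have h2 := SteinAux.sum_absD (μ := μ) (s := s) hμ n
    have h3 : ∑ j ∈ Finset.range n, (if j = s then (1:ℝ) else 0) ≤ 1 := by
      rw [Finset.sum_ite_eq' (Finset.range n) s (fun _ => (1:ℝ))]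
      split <;> norm_num
    have h4 : μ * ∑ j ∈ Finset.range n, |SteinAux.D μ s j| ≤ 2 := by
      calc μ * ∑ j ∈ Finset.range n, |SteinAux.D μ s j| ≤ μ * (2/μ) :=
            mul_le_mul_of_nonneg_left h2 hμ.le
        _ = 2 := by field_simp
    linarith
  have hFsummable : Summable F := summable_of_sum_range_le hFnonneg hFsum
  have hFtsum : ∑' j, F j ≤ 3 := Real.tsum_le_of_sum_range_le hFnonneg hFsum
  set e : ℕ → ℤ := fun j => (j:ℤ) - m with he
  have he_inj : Function.Injective e := by
    intro a b hab
    rw [he] at hab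
    simp only [] at hab
    omega
  have he_range : ∀ l : ℤ, l ∉ Set.range e → h l = 0 := by
    intro l hl
    by_cases hlm : l < -m
    · exact hvanish l hlm
    · exfalso
      apply hl
      exact ⟨(l+m).toNat, by rw [he]; simp only []; omega⟩
  have hcomp : (h ∘ e) = F := by
    funext j
    rw [Function.comp_apply, he]
    simp only []
    rw [hF j, hFdef]
  have hsummable : Summable h := by
    rw [← Function.Injective.summable_iff he_inj he_range, hcomp]
    exact hFsummable
  have htsum : ∑' l : ℤ, h l ≤ 3 := by
    have hsupp : Function.support h ⊆ Set.range e := by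
      intro l hl
      by_contra hx
      exact hl (he_range l hx)
    have := Function.Injective.tsum_eq (f := h) he_inj hsupp
    calc ∑' l : ℤ, h l = ∑' j : ℕ, h (e j) := this.symm
      _ = ∑' j : ℕ, F j := by rw [← hcomp]; rfl
      _ ≤ 3 := hFtsum
  refine ⟨h, hnonneg, hsummable, htsum, ?_⟩
  intro l
  by_cases hl : l < -m
  · have z1 : ghat μ r l = 0 := ghat_low' l (by omega)
    have z2 : ghat μ r (l+1) = 0 := ghat_low' (l+1) (by omega)
    rw [z1, z2]
    have : |((l : ℝ) - (μ - ⌊μ⌋)) * ((0:ℝ) - 0)| = 0 := by simp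
    rw [this]
    have h1μ : (0:ℝ) < 1/μ := by positivity
    exact add_nonneg (add_nonneg (hnonneg (l+1)) (hnonneg l)) h1μ.le
  · set j : ℕ := (l + m).toNat with hj
    have hjl : (j : ℤ) = l + m := by omega
    have el0 : l = (j:ℤ) - m := by omega
    have el1 : l + 1 = ((j+1:ℕ):ℤ) - m := by push_cast; omega
    have el2 : l + 1 + 1 = ((j+2:ℕ):ℤ) - m := by push_cast; omega
    have g0 : ghat μ r l = steinChen μ s j := by rw [el0, ghat_nat]
    have g1 : ghat μ r (l+1) = steinChen μ s (j+1) := by rw [el1, ghat_nat]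
    have hcast : ((l : ℝ) - (μ - ⌊μ⌋)) = ((j:ℝ) - μ) := by
      have : ((j:ℤ):ℝ) = ((l:ℤ):ℝ) + ((m:ℤ):ℝ) := by exact_mod_cast congrArg (Int.cast : ℤ → ℝ) hjl
      push_cast at this ⊢
      rw [hm] at *
      linarith
    rw [g0, g1, hcast]
    have key := SteinAux.main_ineq (μ := μ) (s := s) hμ j
    rw [SteinAux.D, SteinAux.D] at key
    have hl1 : h (l+1) = μ * |steinChen μ s (j+1+1) - steinChen μ s (j+1)|
        + (if j+1 = s then 1 else 0) := by
      rw [el1, hF (j+1), SteinAux.D]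
    have hl0 : h l = μ * |steinChen μ s (j+1) - steinChen μ s j|
        + (if j = s then 1 else 0) := by
      rw [el0, hF j, SteinAux.D]
    rw [hl1, hl0]
    exact key
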